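/- Let d ≥ 2 and 1 ≤ p < d, let λ : ℝ^d → ℝ be continuous and 2πℤ^d-periodic, and let T be a primitive integer p×d matrix. Set λ⁻ = min_{ℝ^d} λ and λ⁺ = max_{ℝ^d} λ. Then the minimum of λ over S_T (which is attained) equals λ⁻ if and only if there exists k₀ ∈ (−π,π]^d with λ(k₀) = λ⁻ and every component of T k₀ in 2πℤ; likewise the maximum of λ over S_T equals λ⁺ if and only if there exists k₀ ∈ (−π,π]^d with λ(k₀) = λ⁺ and every component of T k₀ in 2πℤ. -/

import Mathlib

open Matrix
open scoped Real BigOperators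

/-- Euclidean norm of a vector in `ℝ^n`. -/
noncomputable def euclNorm {n : ℕ} (x : Fin n → ℝ) : ℝ := Real.sqrt (∑ i, (x i)^2)

open scoped Classical in
/-- Smallest eigenvalue of a (Hermitian) real matrix. -/
noncomputable def matLamMin {n : ℕ} (A : Matrix (Fin n) (Fin n) ℝ) : ℝ :=
  if h : A.IsHermitian then ⨅ i, h.eigenvalues i else 0

/-- `τ(T)`: square root of the smallest eigenvalue of `T * Tᵀ`. -/
noncomputable def matTau {p d : ℕ} (T : Matrix (Fin p) (Fin d) ℝ) : ℝ :=
  Real.sqrt (matLamMin (T * Tᵀ))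

open scoped Classical in
/-- `A^{-1/2}`: the inverse of the positive (semi)definite square root of `A`. -/
noncomputable def matInvSqrt {n : ℕ} (A : Matrix (Fin n) (Fin n) ℝ) : Matrix (Fin n) (Fin n) ℝ :=
  if h : A.PosSemidef then ((h.1.eigenvectorUnitary : Matrix (Fin n) (Fin n) ℝ) *
    diagonal (Real.sqrt ∘ h.1.eigenvalues) *
    (star (h.1.eigenvectorUnitary : Matrix (Fin n) (Fin n) ℝ)))⁻¹ else 0

/-- The representative of `x` in `(-π, π]` modulo `2πℤ`. -/
noncomputable def repPi (x : ℝ) : ℝ := x - 2*Real.pi*(⌈(x - Real.pi)/(2*Real.pi)⌉ : ℤ)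

private lemma repPi_mem (x : ℝ) : repPi x ∈ Set.Ioc (-Real.pi) Real.pi := by
  have h2 : (0:ℝ) < 2*Real.pi := by positivity
  have h1 : (x - Real.pi)/(2*Real.pi) ≤ (⌈(x - Real.pi)/(2*Real.pi)⌉ : ℝ) := Int.le_ceil _
  have h2' : ((⌈(x - Real.pi)/(2*Real.pi)⌉ : ℤ) : ℝ) < (x - Real.pi)/(2*Real.pi) + 1 :=
    Int.ceil_lt_add_one _
  have A : x - Real.pi ≤ (⌈(x - Real.pi)/(2*Real.pi)⌉ : ℝ) * (2*Real.pi) :=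
    (div_le_iff₀ h2).mp h1
  have B : ((⌈(x - Real.pi)/(2*Real.pi)⌉ : ℝ) - 1) * (2*Real.pi) < x - Real.pi := by
    have hb : ((⌈(x - Real.pi)/(2*Real.pi)⌉ : ℝ) - 1) < (x - Real.pi)/(2*Real.pi) := by
      linarith
    calc ((⌈(x - Real.pi)/(2*Real.pi)⌉ : ℝ) - 1) * (2*Real.pi)
        < ((x - Real.pi)/(2*Real.pi)) * (2*Real.pi) := by
          exact mul_lt_mul_of_pos_right hb h2
      _ = x - Real.pi := by field_simp
  constructor
  · simp only [repPi]; nlinarith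
  · simp only [repPi]; nlinarith

/-- the (attained) minimum of `λ` over `S_T` equals the global minimum `λ⁻`
iff `T k₀ ∈ 2πℤ^p` for some minimizer `k₀ ∈ (−π,π]^d`; likewise for the maximum. -/
theorem stmt_4 (d p : ℕ) (hd : 2 ≤ d) (hp : 1 ≤ p) (hpd : p < d)
    (lam : (Fin d → ℝ) → ℝ) (hcont : Continuous lam)
    (hper : ∀ (k : Fin d → ℝ) (n : Fin d → ℤ), lam (k + fun i => 2*π*(n i : ℝ)) = lam k)
    (lamlo lamhi : ℝ)
    (hlo : IsLeast (Set.range lam) lamlo) (hhi : IsGreatest (Set.range lam) lamhi)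
    (T : Matrix (Fin p) (Fin d) ℤ)
    (hprim : ∃ S : Matrix (Fin d) (Fin p) ℤ, T * S = 1) :
    (∃ k ∈ {k : Fin d → ℝ | ∀ i, ∃ n : ℤ, (T.map (Int.cast : ℤ → ℝ) *ᵥ k) i = 2*π*n},
      ∀ k' ∈ {k : Fin d → ℝ | ∀ i, ∃ n : ℤ, (T.map (Int.cast : ℤ → ℝ) *ᵥ k) i = 2*π*n},
        lam k ≤ lam k') ∧
    (∃ k ∈ {k : Fin d → ℝ | ∀ i, ∃ n : ℤ, (T.map (Int.cast : ℤ → ℝ) *ᵥ k) i = 2*π*n},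
      ∀ k' ∈ {k : Fin d → ℝ | ∀ i, ∃ n : ℤ, (T.map (Int.cast : ℤ → ℝ) *ᵥ k) i = 2*π*n},
        lam k' ≤ lam k) ∧
    (sInf (lam '' {k | ∀ i, ∃ n : ℤ, (T.map (Int.cast : ℤ → ℝ) *ᵥ k) i = 2*π*n}) = lamlo ↔
      ∃ k₀ : Fin d → ℝ, (∀ i, k₀ i ∈ Set.Ioc (-π) π) ∧ lam k₀ = lamlo ∧
        ∀ i, ∃ n : ℤ, (T.map (Int.cast : ℤ → ℝ) *ᵥ k₀) i = 2*π*n) ∧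
    (sSup (lam '' {k | ∀ i, ∃ n : ℤ, (T.map (Int.cast : ℤ → ℝ) *ᵥ k) i = 2*π*n}) = lamhi ↔
      ∃ k₀ : Fin d → ℝ, (∀ i, k₀ i ∈ Set.Ioc (-π) π) ∧ lam k₀ = lamhi ∧
        ∀ i, ∃ n : ℤ, (T.map (Int.cast : ℤ → ℝ) *ᵥ k₀) i = 2*π*n) := by
  have pipos := Real.pi_pos
  set Tr : Matrix (Fin p) (Fin d) ℝ := T.map (Int.cast : ℤ → ℝ) with hTr
  set S : Set (Fin d → ℝ) := {k | ∀ i, ∃ n : ℤ, (Tr *ᵥ k) i = 2*π*n} with hS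
  -- reduction into (-π, π]^d stays in S and preserves lam
  have hred : ∀ k ∈ S, (fun i => repPi (k i)) ∈ S ∧
      (∀ i, repPi (k i) ∈ Set.Ioc (-π) π) ∧ lam (fun i => repPi (k i)) = lam k := by
    intro k hk
    set m : Fin d → ℤ := fun j => ⌈(k j - Real.pi)/(2*Real.pi)⌉ with hm
    refine ⟨?_, fun i => repPi_mem _, ?_⟩
    · intro i
      obtain ⟨n, hn⟩ := hk i
      refine ⟨n - (T *ᵥ m) i, ?_⟩
      have hmv : (Tr *ᵥ fun j => repPi (k j)) i
          = (Tr *ᵥ k) i - 2*π * ((T *ᵥ m) i : ℝ) := by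
        simp only [Matrix.mulVec, dotProduct, repPi, hTr, Matrix.map_apply, hm]
        push_cast
        rw [Finset.mul_sum]
        rw [← Finset.sum_sub_distrib]
        congr 1; funext j; ring
      rw [hmv, hn]
      push_cast
      ring
    · have heq : ((fun i => repPi (k i)) + fun i => 2*π*((m i : ℤ) : ℝ)) = k := by
        funext i
        simp only [Pi.add_apply, repPi, hm]
        ring
      have := hper (fun i => repPi (k i)) m
      rw [heq] at this
      exact this.symm
  -- S is closed
  have hScl : IsClosed S := by
    have : S = ⋂ i, (fun k => Real.cos ((Tr *ᵥ k) i)) ⁻¹' {1} := by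
      ext k
      simp only [Set.mem_iInter, Set.mem_preimage, Set.mem_singleton_iff, hS, Set.mem_setOf_eq]
      refine forall_congr' fun i => ?_
      rw [Real.cos_eq_one_iff]
      constructor
      · rintro ⟨n, hn⟩; exact ⟨n, by rw [hn]; ring⟩
      · rintro ⟨n, hn⟩; exact ⟨n, by rw [← hn]; ring⟩
    rw [this]
    refine isClosed_iInter fun i => IsClosed.preimage ?_ isClosed_singleton
    exact Real.continuous_cos.comp <| by
      simp only [Matrix.mulVec, dotProduct]
      exact continuous_finset_sum _ fun j _ => (continuous_const.mul (continuous_apply j))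
  -- compact piece
  set C : Set (Fin d → ℝ) := S ∩ Set.univ.pi (fun _ => Set.Icc (-π) π) with hC
  have hCcp : IsCompact C := IsCompact.inter_left
    (isCompact_univ_pi fun _ => isCompact_Icc) hScl
  have h0S : (0 : Fin d → ℝ) ∈ S := by
    intro i
    exact ⟨0, by simp [Matrix.mulVec, dotProduct]⟩
  have hCne : C.Nonempty := ⟨0, h0S, by
    intro i _
    simp only [Pi.zero_apply]
    exact ⟨le_of_lt (by linarith), le_of_lt pipos⟩⟩
  obtain ⟨kmin, hkminC, hkminmin⟩ := hCcp.exists_isMinOn hCne hcont.continuousOn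
  obtain ⟨kmax, hkmaxC, hkmaxmax⟩ := hCcp.exists_isMaxOn hCne hcont.continuousOn
  -- kmin minimizes over all of S
  have hminS : ∀ k ∈ S, lam kmin ≤ lam k := by
    intro k hk
    obtain ⟨h1, h2, h3⟩ := hred k hk
    rw [← h3]
    exact hkminmin ⟨h1, fun i _ => Set.Ioc_subset_Icc_self (h2 i)⟩
  have hmaxS : ∀ k ∈ S, lam k ≤ lam kmax := by
    intro k hk
    obtain ⟨h1, h2, h3⟩ := hred k hk
    rw [← h3]
    exact hkmaxmax ⟨h1, fun i _ => Set.Ioc_subset_Icc_self (h2 i)⟩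
  have hkminS : kmin ∈ S := hkminC.1
  have hkmaxS : kmax ∈ S := hkmaxC.1
  have hInf : sInf (lam '' S) = lam kmin :=
    IsLeast.csInf_eq ⟨⟨kmin, hkminS, rfl⟩, by rintro y ⟨k, hk, rfl⟩; exact hminS k hk⟩
  have hSup : sSup (lam '' S) = lam kmax :=
    IsGreatest.csSup_eq ⟨⟨kmax, hkmaxS, rfl⟩, by rintro y ⟨k, hk, rfl⟩; exact hmaxS k hk⟩
  refine ⟨⟨kmin, hkminS, hminS⟩, ⟨kmax, hkmaxS, hmaxS⟩, ?_, ?_⟩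
  · rw [hInf]
    constructor
    · intro h
      obtain ⟨h1, h2, h3⟩ := hred kmin hkminS
      exact ⟨fun i => repPi (kmin i), h2, by rw [h3, h], h1⟩
    · rintro ⟨k₀, hk₀Ioc, hk₀lam, hk₀S⟩
      have h1 : lam kmin ≤ lamlo := hk₀lam ▸ hminS k₀ hk₀S
      have h2 : lamlo ≤ lam kmin := hlo.2 ⟨kmin, rfl⟩
      linarith
  · rw [hSup]
    constructor
    · intro h
      obtain ⟨h1, h2, h3⟩ := hred kmax hkmaxS
      exact ⟨fun i => repPi (kmax i), h2, by rw [h3, h], h1⟩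
    · rintro ⟨k₀, hk₀Ioc, hk₀lam, hk₀S⟩
      have h1 : lamhi ≤ lam kmax := hk₀lam ▸ hmaxS k₀ hk₀S
      have h2 : lam kmax ≤ lamhi := hhi.2 ⟨kmax, rfl⟩
      linarith
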